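/- arXiv:0804.0600 — 2 statements merged into one kernel-verified Lean document; each statement's English description precedes it below -/
import Mathlib

section
/- Let p be a prime and 0 ≤ a ≤ b integers with a + b odd. Define F(X) = (1 + p^(-1) X)(1 - p^(-2) X) · ∑_{ℓ=0}^{a} (pX)^ℓ · ( ∑_{k=0}^{a+b-2ℓ} (-X)^k ) as a polynomial in X over the rationals. Then -(1 - p^(-2))^(-1) (1 + p^(-1))^(-1) · F'(1) = (1/2) ∑_{ℓ=0}^{a} p^ℓ (a + b - 2ℓ + 1). -/
open Polynomial

lemma alt_eval_one (t : ℕ) :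
    (∑ k ∈ Finset.range (2 * t + 1 + 1), (-X : ℚ[X]) ^ k).eval 1 = 0 := by
  induction t with
  | zero => simp [Finset.sum_range_succ]
  | succ n ih =>
      have : 2 * (n + 1) + 1 + 1 = (2 * n + 1 + 1) + 1 + 1 := by ring
      rw [this, Finset.sum_range_succ, Finset.sum_range_succ]
      simp only [eval_add, eval_pow, eval_neg, eval_X, ih]
      have h1 : ((-1:ℚ))^(2*n+1+1) = 1 := by simp [pow_succ, pow_mul]
      have h2 : ((-1:ℚ))^(2*n+1+1+1) = -1 := by rw [pow_succ, h1]; ring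
      rw [h1, h2]; ring

lemma alt_deriv_eval_one (t : ℕ) :
    (derivative (∑ k ∈ Finset.range (2 * t + 1 + 1), (-X : ℚ[X]) ^ k)).eval 1
      = -(((2 * t + 1 : ℕ) : ℚ) + 1) / 2 := by
  induction t with
  | zero => simp [Finset.sum_range_succ]
  | succ n ih =>
      have : 2 * (n + 1) + 1 + 1 = (2 * n + 1 + 1) + 1 + 1 := by ring
      rw [this, Finset.sum_range_succ, Finset.sum_range_succ]
      simp only [derivative_add, eval_add, ih]
      have e1 : ((-1:ℚ))^(2*n+1) = -1 := by simp [pow_succ, pow_mul]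
      have e2 : ((-1:ℚ))^(2*n+1+1) = 1 := by rw [pow_succ, e1]; ring
      have h1 : (derivative ((-X : ℚ[X]) ^ (2 * n + 1 + 1))).eval 1
          = ((2*n+1+1 : ℕ) : ℚ) := by
        simp [derivative_pow]
        rw [e1]; push_cast; ring
      have h2 : (derivative ((-X : ℚ[X]) ^ (2 * n + 1 + 1 + 1))).eval 1
          = -((2*n+1+1+1 : ℕ) : ℚ) := by
        simp [derivative_pow]
        rw [e2]; push_cast; ring
      rw [h1, h2]
      push_cast
      ring

lemma alt_eval_one' (m : ℕ) (hm : Odd m) :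
    (∑ k ∈ Finset.range (m + 1), (-X : ℚ[X]) ^ k).eval 1 = 0 := by
  obtain ⟨t, rfl⟩ := hm
  exact alt_eval_one t

lemma alt_deriv_eval_one' (m : ℕ) (hm : Odd m) :
    (derivative (∑ k ∈ Finset.range (m + 1), (-X : ℚ[X]) ^ k)).eval 1
      = -((m : ℚ) + 1) / 2 := by
  obtain ⟨t, rfl⟩ := hm
  exact alt_deriv_eval_one t


/-- Nagaoka's polynomial `F(X) = (1 + p⁻¹X)(1 - p⁻²X) ∑_{ℓ=0}^{a} (pX)^ℓ ∑_{k=0}^{a+b-2ℓ} (-X)^k`. -/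
noncomputable def nagaokaF (p a b : ℕ) : Polynomial ℚ :=
  (1 + C ((p : ℚ)⁻¹) * X) * (1 - C (((p : ℚ) ^ 2)⁻¹) * X) *
    ∑ ℓ ∈ Finset.range (a + 1),
      (C (p : ℚ) * X) ^ ℓ * ∑ k ∈ Finset.range (a + b - 2 * ℓ + 1), (-X) ^ k

/-- For `0 ≤ a ≤ b` with `a + b` odd,
`-(1 - p⁻²)⁻¹ (1 + p⁻¹)⁻¹ F'(1) = (1/2) ∑_{ℓ=0}^{a} p^ℓ (a + b - 2ℓ + 1)`. -/
theorem nagaokaF_derivative_eval_one (p a b : ℕ) (hp : p.Prime) (hab : a ≤ b)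
    (habodd : Odd (a + b)) :
    -((1 - ((p : ℚ) ^ 2)⁻¹)⁻¹ * (1 + (p : ℚ)⁻¹)⁻¹ *
        ((nagaokaF p a b).derivative.eval 1))
      = (1 / 2) * ∑ ℓ ∈ Finset.range (a + 1),
          (p : ℚ) ^ ℓ * ((a : ℚ) + (b : ℚ) - 2 * (ℓ : ℚ) + 1) := by
  have hodd : ∀ ℓ ∈ Finset.range (a + 1), Odd (a + b - 2 * ℓ) := by
    intro ℓ hℓ
    rw [Finset.mem_range] at hℓ
    exact Nat.Odd.sub_even (by omega) habodd (even_two_mul ℓ)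
  set G : ℚ[X] := ∑ ℓ ∈ Finset.range (a + 1),
      (C (p : ℚ) * X) ^ ℓ * ∑ k ∈ Finset.range (a + b - 2 * ℓ + 1), (-X) ^ k with hGdef
  have hG1 : G.eval 1 = 0 := by
    rw [hGdef, eval_finset_sum]
    refine Finset.sum_eq_zero fun ℓ hℓ => ?_
    rw [eval_mul, alt_eval_one' _ (hodd ℓ hℓ), mul_zero]
  have hG' : G.derivative.eval 1
      = ∑ ℓ ∈ Finset.range (a + 1),
          (p : ℚ) ^ ℓ * (-(((a + b - 2 * ℓ : ℕ) : ℚ) + 1) / 2) := by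
    rw [hGdef, derivative_sum]
    rw [eval_finset_sum]
    refine Finset.sum_congr rfl fun ℓ hℓ => ?_
    rw [derivative_mul, eval_add, eval_mul, eval_mul,
      alt_eval_one' _ (hodd ℓ hℓ), mul_zero, zero_add,
      alt_deriv_eval_one' _ (hodd ℓ hℓ)]
    simp
  have hF : (nagaokaF p a b).derivative.eval 1
      = ((1 + (p : ℚ)⁻¹) * (1 - ((p : ℚ) ^ 2)⁻¹)) * G.derivative.eval 1 := by
    rw [nagaokaF, ← hGdef, derivative_mul, eval_add, eval_mul, hG1, mul_zero,
      eval_mul]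
    simp
  have hp2 : (2 : ℚ) ≤ (p : ℚ) := by exact_mod_cast hp.two_le
  have h1 : (1 - ((p : ℚ) ^ 2)⁻¹) ≠ 0 := by
    have : ((p : ℚ) ^ 2)⁻¹ < 1 := by
      rw [inv_lt_one_iff₀]; right; nlinarith
    linarith
  have h2 : (1 + (p : ℚ)⁻¹) ≠ 0 := by
    have : (0:ℚ) < (p : ℚ)⁻¹ := by positivity
    linarith
  rw [hF]
  have hkey : -((1 - ((p : ℚ) ^ 2)⁻¹)⁻¹ * (1 + (p : ℚ)⁻¹)⁻¹ *
      (((1 + (p : ℚ)⁻¹) * (1 - ((p : ℚ) ^ 2)⁻¹)) * G.derivative.eval 1))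
      = -G.derivative.eval 1 := by
    calc -((1 - ((p : ℚ) ^ 2)⁻¹)⁻¹ * (1 + (p : ℚ)⁻¹)⁻¹ *
        (((1 + (p : ℚ)⁻¹) * (1 - ((p : ℚ) ^ 2)⁻¹)) * G.derivative.eval 1))
        = -(((1 - ((p : ℚ) ^ 2)⁻¹)⁻¹ * (1 - ((p : ℚ) ^ 2)⁻¹)) *
            (((1 + (p : ℚ)⁻¹)⁻¹ * (1 + (p : ℚ)⁻¹)) * G.derivative.eval 1)) := by
          ring
      _ = -G.derivative.eval 1 := by
          rw [inv_mul_cancel₀ h1, inv_mul_cancel₀ h2]; ring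
  rw [hkey, hG', ← Finset.sum_neg_distrib, Finset.mul_sum]
  refine Finset.sum_congr rfl fun ℓ hℓ => ?_
  rw [Finset.mem_range] at hℓ
  rw [Nat.cast_sub (by omega)]
  push_cast
  ring
end

section
/- Let p be a prime, W the Witt vectors of F̄_p, A = W[[t]] with σ: A → A the ring endomorphism acting as Frobenius on W and σ(t) = t^p. With U = [[0,1],[p,t]], Ŭ = [[0,1],[p,−t]], S = [[0,1],[p,0]] and the recursion Y(n+1) = U^{-1}σ(X(n))S, X(n+1) = Ŭ^{-1}σ(Y(n))S starting from X(0) = [[p^r,0],[0,0]], Y(0) = [[0,0],[0,p^r]] (for r ≥ 0, over A[1/p]): the upper-right entry of Y(2s+1) is ±p^{r−s−1}·t^{(p^{2s+1}−1)/(p−1)} + p^{r−s}·(element of W[t]) for all 0 ≤ s ≤ r, and moreover X(2i)=X(2i+1) and Y(2i+1)=Y(2i+2) for all i ≥ 0. -/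
open Matrix

section aux
variable (p : ℕ) (B : Type) [CommRing B] [Invertible (p : B)] (σ : B →+* B) (t : B)

lemma zink_map_lit (a b c d : B) : (!![a, b; c, d]).map σ = !![σ a, σ b; σ c, σ d] := by
  ext i j; fin_cases i <;> fin_cases j <;> simp

lemma zink_Uinv_eq : (!![0, 1; (p : B), t])⁻¹ = !![-(t * ⅟(p:B)), ⅟(p:B); 1, 0] := by
  apply Matrix.inv_eq_right_inv
  rw [Matrix.mul_fin_two, Matrix.one_fin_two]
  congr 1 <;> ring_nf <;> simp [mul_invOf_self]

lemma zink_Ubinv_eq : (!![0, 1; (p : B), -t])⁻¹ = !![t * ⅟(p:B), ⅟(p:B); 1, 0] := by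
  apply Matrix.inv_eq_right_inv
  rw [Matrix.mul_fin_two, Matrix.one_fin_two]
  congr 1 <;> ring_nf <;> simp [mul_invOf_self]

lemma zink_stepY (b d : B) :
    (!![0, 1; (p : B), -t])⁻¹ * !![0, b; 0, d] * !![0, 1; (p : B), 0]
      = !![t * b + d, 0; (p : B) * b, 0] := by
  rw [zink_Ubinv_eq, Matrix.mul_fin_two, Matrix.mul_fin_two]
  ext i j
  fin_cases i <;> fin_cases j <;> (try simp)
  · linear_combination (t * b + d) * invOf_mul_self (p : B)
  · ring

lemma zink_stepX (a c : B) :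
    (!![0, 1; (p : B), t])⁻¹ * !![a, 0; c, 0] * !![0, 1; (p : B), 0]
      = !![0, ⅟(p:B) * c - ⅟(p:B) * t * a; 0, a] := by
  rw [zink_Uinv_eq, Matrix.mul_fin_two, Matrix.mul_fin_two]
  ext i j
  fin_cases i <;> fin_cases j <;> (try simp) <;> ring

end aux

/-- The pair of matrix sequences `(X(n), Y(n))` of Zink's display recursion:
`X(0) = [[p^r,0],[0,0]]`, `Y(0) = [[0,0],[0,p^r]]`,
`X(n+1) = Ŭ⁻¹ σ(Y(n)) S`, `Y(n+1) = U⁻¹ σ(X(n)) S`, with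
`U = [[0,1],[p,t]]`, `Ŭ = [[0,1],[p,−t]]`, `S = [[0,1],[p,0]]`. -/
noncomputable def zinkSeq (p : ℕ) (B : Type) [CommRing B] [Invertible (p : B)]
    (σ : B →+* B) (t : B) (r : ℕ) :
    ℕ → Matrix (Fin 2) (Fin 2) B × Matrix (Fin 2) (Fin 2) B
  | 0 => (!![(p : B) ^ r, 0; 0, 0], !![0, 0; 0, (p : B) ^ r])
  | n + 1 =>
      ((!![0, 1; (p : B), -t])⁻¹ * ((zinkSeq p B σ t r n).2.map σ) * !![0, 1; (p : B), 0],
       (!![0, 1; (p : B), t])⁻¹ * ((zinkSeq p B σ t r n).1.map σ) * !![0, 1; (p : B), 0])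

/-- Scalar version `(a, c, b, d)` with `X = !![a,0;c,0]`, `Y = !![0,b;0,d]`. -/
noncomputable def zsc (p : ℕ) (B : Type) [CommRing B] [Invertible (p : B)]
    (σ : B →+* B) (t : B) (r : ℕ) : ℕ → B × B × B × B
  | 0 => ((p : B) ^ r, 0, 0, (p : B) ^ r)
  | n + 1 =>
      (t * σ (zsc p B σ t r n).2.2.1 + σ (zsc p B σ t r n).2.2.2,
       (p : B) * σ (zsc p B σ t r n).2.2.1,
       ⅟(p : B) * σ (zsc p B σ t r n).2.1 - ⅟(p : B) * t * σ (zsc p B σ t r n).1,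
       σ (zsc p B σ t r n).1)

lemma zinkSeq_eq (p : ℕ) (B : Type) [CommRing B] [Invertible (p : B)]
    (σ : B →+* B) (t : B) (r : ℕ) (n : ℕ) :
    zinkSeq p B σ t r n =
      (!![(zsc p B σ t r n).1, 0; (zsc p B σ t r n).2.1, 0],
       !![0, (zsc p B σ t r n).2.2.1; 0, (zsc p B σ t r n).2.2.2]) := by
  induction n with
  | zero => rfl
  | succ n ih =>
      rw [zinkSeq, ih]
      dsimp only
      rw [zink_map_lit, zink_map_lit, map_zero, zink_stepX, zink_stepY]
      rfl

lemma zink_sumA (p : ℕ) (n : ℕ) :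
    ∑ i ∈ Finset.range n, p ^ (i + 1) = p * ∑ i ∈ Finset.range n, p ^ i := by
  rw [Finset.mul_sum]
  exact Finset.sum_congr rfl (by intros; ring)

lemma zink_sumB (p : ℕ) (n : ℕ) : ∑ i ∈ Finset.range (n + 1), p ^ i
    = 1 + p * ∑ i ∈ Finset.range n, p ^ i := by
  rw [Finset.sum_range_succ', zink_sumA]
  simp [add_comm]

/-- Key claim in Zink's computation: `X(2i) = X(2i+1)` and `Y(2i+1) = Y(2i+2)` for all `i`,
and for `0 ≤ s ≤ r` the upper-right entry of `Y(2s+1)` equals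
`± p^{r−s−1} t^{p^{2s}+⋯+p+1} + p^{r−s}·P` with `P` in the "integral" subring `A₀`
(playing the role of `W[t]` inside `W[t][1/p]`). -/
theorem zink_recursion (p : ℕ) (hp : p.Prime) (B : Type) [CommRing B]
    [Invertible (p : B)] (σ : B →+* B) (t : B) (hσt : σ t = t ^ p)
    (A₀ : Subring B) (ht : t ∈ A₀) (hσA : ∀ x ∈ A₀, σ x ∈ A₀) (r : ℕ) :
    (∀ i : ℕ, (zinkSeq p B σ t r (2 * i)).1 = (zinkSeq p B σ t r (2 * i + 1)).1 ∧
       (zinkSeq p B σ t r (2 * i + 1)).2 = (zinkSeq p B σ t r (2 * i + 2)).2) ∧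
    (∀ s : ℕ, s ≤ r → ∃ ε P : B, (ε = 1 ∨ ε = -1) ∧ P ∈ A₀ ∧
       (zinkSeq p B σ t r (2 * s + 1)).2 0 1
         = ε * (p : B) ^ (r - s) * ⅟(p : B) * t ^ (∑ i ∈ Finset.range (2 * s + 1), p ^ i)
             + (p : B) ^ (r - s) * P) := by
  have base : (zinkSeq p B σ t r 0).1 = (zinkSeq p B σ t r 1).1 := by
    rw [zinkSeq_eq, zinkSeq_eq]
    simp [zsc]
  have keyY : ∀ n, (zinkSeq p B σ t r n).1 = (zinkSeq p B σ t r (n + 1)).1 →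
      (zinkSeq p B σ t r (n + 1)).2 = (zinkSeq p B σ t r (n + 1 + 1)).2 := by
    intro n h
    conv_lhs => rw [zinkSeq]
    conv_rhs => rw [zinkSeq]
    rw [h]
  have keyX : ∀ n, (zinkSeq p B σ t r n).2 = (zinkSeq p B σ t r (n + 1)).2 →
      (zinkSeq p B σ t r (n + 1)).1 = (zinkSeq p B σ t r (n + 1 + 1)).1 := by
    intro n h
    conv_lhs => rw [zinkSeq]
    conv_rhs => rw [zinkSeq]
    rw [h]
  have part1 : ∀ i : ℕ, (zinkSeq p B σ t r (2 * i)).1 = (zinkSeq p B σ t r (2 * i + 1)).1 ∧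
      (zinkSeq p B σ t r (2 * i + 1)).2 = (zinkSeq p B σ t r (2 * i + 2)).2 := by
    intro i
    induction i with
    | zero => exact ⟨base, keyY 0 base⟩
    | succ i ih =>
        have h1 := keyX (2 * i + 1) ih.2
        have e1 : 2 * (i + 1) = 2 * i + 1 + 1 := by ring
        rw [e1]
        exact ⟨h1, keyY (2 * i + 1 + 1) h1⟩
  refine ⟨part1, ?_⟩
  have hNs : ∀ s : ℕ, ∑ i ∈ Finset.range (2 * (s + 1) + 1), p ^ i
      = (p + 1) + p * (p * ∑ i ∈ Finset.range (2 * s + 1), p ^ i) := by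
    intro s
    have e : 2 * (s + 1) + 1 = (2 * s + 1) + 1 + 1 := by ring
    rw [e, zink_sumB, zink_sumB]
    ring
  have hMs : ∀ s : ℕ, ∑ i ∈ Finset.range (2 * (s + 1)), p ^ (i + 1)
      = p + p * (p * ∑ i ∈ Finset.range (2 * s + 1), p ^ i) := by
    intro s
    have e : 2 * (s + 1) = (2 * s + 1) + 1 := by ring
    rw [e, zink_sumA, zink_sumB]
    ring
  have hσpow : ∀ k : ℕ, σ (t ^ k) = t ^ (p * k) := by
    intro k
    rw [map_pow, hσt, ← pow_mul]
  have main : ∀ s : ℕ, ∃ ε P Q : B, (ε = 1 ∨ ε = -1) ∧ P ∈ A₀ ∧ Q ∈ A₀ ∧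
      (p : B) ^ (s + 1) * (zsc p B σ t r (2 * s + 1)).2.2.1
        = ε * (p : B) ^ r * t ^ (∑ i ∈ Finset.range (2 * s + 1), p ^ i)
          + (p : B) ^ (r + 1) * P ∧
      (p : B) ^ s * (zsc p B σ t r (2 * s + 1)).2.2.2
        = -ε * (p : B) ^ r * t ^ (∑ i ∈ Finset.range (2 * s), p ^ (i + 1))
          + (p : B) ^ (r + 1) * Q := by
    intro s
    induction s with
    | zero =>
        refine ⟨-1, 0, 0, Or.inr rfl, zero_mem _, zero_mem _, ?_, ?_⟩
        · simp [zsc]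
          linear_combination (t * (p : B) ^ r) * mul_invOf_self (p : B)
        · simp [zsc]
    | succ s ih =>
        obtain ⟨ε, P, Q, hε, hP, hQ, hb, hd⟩ := ih
        set b := (zsc p B σ t r (2 * s + 1)).2.2.1 with hbdef
        set d := (zsc p B σ t r (2 * s + 1)).2.2.2 with hddef
        set N := ∑ i ∈ Finset.range (2 * s + 1), p ^ i with hNdef
        set M := ∑ i ∈ Finset.range (2 * s), p ^ (i + 1) with hMdef
        have hσε : σ ε = ε := by rcases hε with rfl | rfl <;> simp
        have hb2 : (p : B) ^ (s + 1) * σ (σ b)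
            = ε * (p : B) ^ r * t ^ (p * (p * N)) + (p : B) ^ (r + 1) * σ (σ P) := by
          have h1 := congrArg σ (congrArg σ hb)
          simpa [_root_.map_mul, _root_.map_add, map_pow, map_natCast, hσpow, hσε, mul_assoc] using h1
        have hd2 : (p : B) ^ s * σ (σ d)
            = -ε * (p : B) ^ r * t ^ (p * (p * M)) + (p : B) ^ (r + 1) * σ (σ Q) := by
          have h1 := congrArg σ (congrArg σ hd)
          simpa [_root_.map_mul, _root_.map_add, map_neg, map_pow, map_natCast, hσpow, hσε, mul_assoc] using h1
        have hεA : ε ∈ A₀ := by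
          rcases hε with rfl | rfl
          · exact one_mem _
          · exact neg_mem (one_mem _)
        have hpA : ((p : ℕ) : B) ∈ A₀ := natCast_mem A₀ p
        have e2 : 2 * (s + 1) + 1 = 2 * s + 1 + 1 + 1 := by ring
        refine ⟨-ε,
          ε * t ^ (p * (p * N)) + (p : B) * σ (σ P) - t ^ (p + 1) * σ (σ P)
            + ε * t ^ (1 + p * (p * M)) - (p : B) * t * σ (σ Q),
          t ^ p * σ (σ P) - ε * t ^ (p * (p * M)) + (p : B) * σ (σ Q),
          ?_, ?_, ?_, ?_, ?_⟩
        · rcases hε with rfl | rfl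
          · exact Or.inr rfl
          · exact Or.inl (by ring)
        · exact sub_mem (add_mem (sub_mem
            (add_mem (mul_mem hεA (pow_mem ht _)) (mul_mem hpA (hσA _ (hσA _ hP))))
            (mul_mem (pow_mem ht _) (hσA _ (hσA _ hP))))
            (mul_mem hεA (pow_mem ht _)))
            (mul_mem (mul_mem hpA ht) (hσA _ (hσA _ hQ)))
        · exact add_mem (sub_mem (mul_mem (pow_mem ht _) (hσA _ (hσA _ hP)))
            (mul_mem hεA (pow_mem ht _))) (mul_mem hpA (hσA _ (hσA _ hQ)))
        · -- the b-equation at s+1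
          rw [hNs]
          show (p : B) ^ (s + 1 + 1) * (zsc p B σ t r (2 * s + 1 + 1 + 1)).2.2.1 = _
          rw [zsc]
          dsimp only
          rw [zsc]
          dsimp only
          simp only [_root_.map_mul, _root_.map_add, map_natCast, hσt]
          linear_combination
            ((p : B) ^ (s + 1) * ((p : B) * σ (σ b) - t ^ (p + 1) * σ (σ b) - t * σ (σ d)))
              * mul_invOf_self (p : B)
            + ((p : B) - t ^ (p + 1)) * hb2 + (-((p : B) * t)) * hd2
        · -- the d-equation at s+1
          rw [hMs]
          show (p : B) ^ (s + 1) * (zsc p B σ t r (2 * s + 1 + 1 + 1)).2.2.2 = _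
          rw [zsc]
          dsimp only
          rw [zsc]
          dsimp only
          simp only [_root_.map_mul, _root_.map_add, map_natCast, hσt]
          linear_combination t ^ p * hb2 + (p : B) * hd2
  intro s hs
  obtain ⟨ε, P, Q, hε, hP, hQ, hb, hd⟩ := main s
  refine ⟨ε, P, hε, hP, ?_⟩
  have hentry : (zinkSeq p B σ t r (2 * s + 1)).2 0 1 = (zsc p B σ t r (2 * s + 1)).2.2.1 := by
    rw [zinkSeq_eq]
    simp
  rw [hentry]
  have hcan : (p : B) ^ (s + 1) * (⅟(p : B)) ^ (s + 1) = 1 := by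
    rw [← mul_pow, mul_invOf_self, one_pow]
  have hcan2 : (p : B) ^ s * (⅟(p : B)) ^ s = 1 := by
    rw [← mul_pow, mul_invOf_self, one_pow]
  have hr1 : (p : B) ^ r = (p : B) ^ (r - s) * (p : B) ^ s := by
    rw [← pow_add, Nat.sub_add_cancel hs]
  have hr2 : (p : B) ^ (r + 1) = (p : B) ^ (r - s) * (p : B) ^ (s + 1) := by
    rw [← pow_add]
    congr 1
    omega
  have hbb : (zsc p B σ t r (2 * s + 1)).2.2.1
      = (⅟(p : B)) ^ (s + 1) * ((p : B) ^ (s + 1) * (zsc p B σ t r (2 * s + 1)).2.2.1) := by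
    rw [← mul_assoc, mul_comm ((⅟(p : B)) ^ (s + 1)), hcan, one_mul]
  rw [hbb, hb, hr1, hr2]
  linear_combination (ε * (p : B) ^ (r - s) * ⅟(p : B)
      * t ^ (∑ i ∈ Finset.range (2 * s + 1), p ^ i)) * hcan2
    + ((p : B) ^ (r - s) * P) * hcan
end
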